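/- arXiv:2209.09228 — 3 statements merged into one kernel-verified Lean document; each statement's English description precedes it below -/
import Mathlib

section
/- Let V:ℝ²→ℝ² be continuous and ℤ²-periodic, d > 0, and g ∈ UC(ℝ²). There exists a constant C depending only on d and max_{ℝ²}|V| such that for every step size τ ∈ (0,1] and every N ∈ ℕ with t = Nτ² ∈ (0,1], the game value satisfies min_{|y−x|≤C√t} g(y) ≤ u_τ(x, Nτ²) ≤ max_{|y−x|≤C√t} g(y) for every x ∈ ℝ². -/
noncomputable section

/-- `ℝⁿ` with the Euclidean norm. -/
abbrev En (n : ℕ) := EuclideanSpace ℝ (Fin n)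

/-- Trace of a (continuous bilinear) form on `ℝⁿ`, w.r.t. the standard basis. -/
def bilTrace {n : ℕ} (B : En n →L[ℝ] En n →L[ℝ] ℝ) : ℝ :=
  ∑ i : Fin n, B (EuclideanSpace.single i 1) (EuclideanSpace.single i 1)

/-- `F(X,p) = (|p| − d (tr X − p·Xp/|p|²))₊`. -/
def Fcurv {n : ℕ} (d : ℝ) (B : En n →L[ℝ] En n →L[ℝ] ℝ) (p : En n) : ℝ :=
  max (‖p‖ - d * (bilTrace B - B p p / ‖p‖ ^ 2)) 0

open Classical in
/-- `F̲(X,p)`: lower semicontinuous envelope, equal to `0` at `p = 0`. -/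
def Funder {n : ℕ} (d : ℝ) (B : En n →L[ℝ] En n →L[ℝ] ℝ) (p : En n) : ℝ :=
  if p = 0 then 0 else Fcurv d B p

open Classical in
/-- `F̄(X,p)`: upper semicontinuous envelope, equal to `2dn‖X‖` at `p = 0`. -/
def Fover {n : ℕ} (d : ℝ) (B : En n →L[ℝ] En n →L[ℝ] ℝ) (p : En n) : ℝ :=
  if p = 0 then 2 * d * n * ‖B‖ else Fcurv d B p

/-- Spatial gradient of a test function `φ(x,t)`. -/
def spaceGrad {n : ℕ} (φ : En n × ℝ → ℝ) (x : En n) (t : ℝ) : En n :=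
  gradient (fun y => φ (y, t)) x

/-- Spatial Hessian (as a bilinear form) of a test function `φ(x,t)`. -/
def spaceHess {n : ℕ} (φ : En n × ℝ → ℝ) (x : En n) (t : ℝ) :
    En n →L[ℝ] En n →L[ℝ] ℝ :=
  fderiv ℝ (fun y => fderiv ℝ (fun z => φ (z, t)) y) x

/-- Hessian (as a bilinear form) of `φ : ℝⁿ → ℝ`. -/
def hess {n : ℕ} (φ : En n → ℝ) (x : En n) : En n →L[ℝ] En n →L[ℝ] ℝ :=
  fderiv ℝ (fderiv ℝ φ) x

/-- Viscosity subsolution of `G_t + (1 − d div(DG/|DG|))₊|DG| + V·DG = 0` on `ℝⁿ × (0,∞)`. -/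
def IsGSubsolution {n : ℕ} (d : ℝ) (V : En n → En n) (G : En n → ℝ → ℝ) : Prop :=
  ∀ φ : En n × ℝ → ℝ, ContDiff ℝ 2 φ → ∀ (x₀ : En n) (t₀ : ℝ), 0 < t₀ →
    (∀ x t, 0 < t → G x t - φ (x, t) ≤ G x₀ t₀ - φ (x₀, t₀)) →
    deriv (fun s => φ (x₀, s)) t₀ +
      Funder d (spaceHess φ x₀ t₀) (spaceGrad φ x₀ t₀) +
      (inner ℝ (V x₀) (spaceGrad φ x₀ t₀) : ℝ) ≤ 0

/-- Viscosity supersolution of the curvature G-equation on `ℝⁿ × (0,∞)`. -/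
def IsGSupersolution {n : ℕ} (d : ℝ) (V : En n → En n) (G : En n → ℝ → ℝ) : Prop :=
  ∀ φ : En n × ℝ → ℝ, ContDiff ℝ 2 φ → ∀ (x₀ : En n) (t₀ : ℝ), 0 < t₀ →
    (∀ x t, 0 < t → G x₀ t₀ - φ (x₀, t₀) ≤ G x t - φ (x, t)) →
    deriv (fun s => φ (x₀, s)) t₀ +
      Fover d (spaceHess φ x₀ t₀) (spaceGrad φ x₀ t₀) +
      (inner ℝ (V x₀) (spaceGrad φ x₀ t₀) : ℝ) ≥ 0

/-- Viscosity solution of the curvature G-equation with initial data `g`: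
continuous on `ℝⁿ × [0,∞)`, both sub- and supersolution, attaining the
initial data uniformly as `t → 0`. -/
def IsGSolution {n : ℕ} (d : ℝ) (V : En n → En n) (g : En n → ℝ)
    (G : En n → ℝ → ℝ) : Prop :=
  ContinuousOn (fun q : En n × ℝ => G q.1 q.2) {q | 0 ≤ q.2} ∧
  IsGSubsolution d V G ∧ IsGSupersolution d V G ∧
  (∀ x, G x 0 = g x) ∧
  TendstoUniformly (fun t x => G x t) g (nhdsWithin (0 : ℝ) (Set.Ioi 0))

/-- `ℤⁿ`-periodicity. -/
def ZPeriodic {n : ℕ} {α : Type*} (f : En n → α) : Prop :=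
  ∀ (k : Fin n → ℤ) (x : En n),
    f (x + (WithLp.equiv 2 (Fin n → ℝ)).symm (fun i => (k i : ℝ))) = f x

/-- Viscosity subsolution of `(1 − d div(Du/|Du|))₊|Du| + V·Du = α` on `Ω`. -/
def IsStatSubsolutionOn {n : ℕ} (d : ℝ) (V : En n → En n) (α : ℝ)
    (Ω : Set (En n)) (u : En n → ℝ) : Prop :=
  ∀ φ : En n → ℝ, ContDiff ℝ 2 φ → ∀ x₀ ∈ Ω,
    (∀ x ∈ Ω, u x - φ x ≤ u x₀ - φ x₀) →
    Funder d (hess φ x₀) (gradient φ x₀) + (inner ℝ (V x₀) (gradient φ x₀) : ℝ) ≤ α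

/-- Viscosity supersolution of `(1 − d div(Du/|Du|))₊|Du| + V·Du = α` on `Ω`. -/
def IsStatSupersolutionOn {n : ℕ} (d : ℝ) (V : En n → En n) (α : ℝ)
    (Ω : Set (En n)) (u : En n → ℝ) : Prop :=
  ∀ φ : En n → ℝ, ContDiff ℝ 2 φ → ∀ x₀ ∈ Ω,
    (∀ x ∈ Ω, u x₀ - φ x₀ ≤ u x - φ x) →
    Fover d (hess φ x₀) (gradient φ x₀) + (inner ℝ (V x₀) (gradient φ x₀) : ℝ) ≥ α

/-- Viscosity subsolution of the discounted cell problem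
`λv + (1 − d div((p+Dv)/|p+Dv|))₊|p+Dv| + V·(p+Dv) = 0` on `ℝⁿ`. -/
def IsCellSubsolution {n : ℕ} (d : ℝ) (V : En n → En n) (p : En n) (lam : ℝ)
    (v : En n → ℝ) : Prop :=
  ∀ φ : En n → ℝ, ContDiff ℝ 2 φ → ∀ x₀ : En n,
    (∀ x, v x - φ x ≤ v x₀ - φ x₀) →
    lam * v x₀ + Funder d (hess φ x₀) (p + gradient φ x₀) +
      (inner ℝ (V x₀) (p + gradient φ x₀) : ℝ) ≤ 0

/-- Viscosity supersolution of the discounted cell problem. -/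
def IsCellSupersolution {n : ℕ} (d : ℝ) (V : En n → En n) (p : En n) (lam : ℝ)
    (v : En n → ℝ) : Prop :=
  ∀ φ : En n → ℝ, ContDiff ℝ 2 φ → ∀ x₀ : En n,
    (∀ x, v x₀ - φ x₀ ≤ v x - φ x) →
    lam * v x₀ + Fover d (hess φ x₀) (p + gradient φ x₀) +
      (inner ℝ (V x₀) (p + gradient φ x₀) : ℝ) ≥ 0

/-- Viscosity solution of the discounted cell problem. -/
def IsCellSolution {n : ℕ} (d : ℝ) (V : En n → En n) (p : En n) (lam : ℝ)
    (v : En n → ℝ) : Prop :=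
  IsCellSubsolution d V p lam v ∧ IsCellSupersolution d V p lam v

/-- Viscosity subsolution of the ergodic (cell) equation
`(1 − d div((p+Dv)/|p+Dv|))₊|p+Dv| + V·(p+Dv) = c` on `ℝⁿ`. -/
def IsErgodicSubsolution {n : ℕ} (d : ℝ) (V : En n → En n) (p : En n) (c : ℝ)
    (w : En n → ℝ) : Prop :=
  ∀ φ : En n → ℝ, ContDiff ℝ 2 φ → ∀ x₀ : En n,
    (∀ x, w x - φ x ≤ w x₀ - φ x₀) →
    Funder d (hess φ x₀) (p + gradient φ x₀) +
      (inner ℝ (V x₀) (p + gradient φ x₀) : ℝ) ≤ c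

/-- Viscosity supersolution of the ergodic (cell) equation. -/
def IsErgodicSupersolution {n : ℕ} (d : ℝ) (V : En n → En n) (p : En n) (c : ℝ)
    (w : En n → ℝ) : Prop :=
  ∀ φ : En n → ℝ, ContDiff ℝ 2 φ → ∀ x₀ : En n,
    (∀ x, w x₀ - φ x₀ ≤ w x - φ x) →
    Fover d (hess φ x₀) (p + gradient φ x₀) +
      (inner ℝ (V x₀) (p + gradient φ x₀) : ℝ) ≥ c

/-- The vector `(a, b) ∈ ℝ²`. -/
def vec2 (a b : ℝ) : En 2 := WithLp.toLp 2 ((![a, b]) : Fin 2 → ℝ)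

/-- The stream function `H(x₁,x₂) = sin x₁ sin x₂`. -/
def cellH (x : En 2) : ℝ := Real.sin (x 0) * Real.sin (x 1)

/-- The cellular flow `V = A (DH)^⊥ = A(−cos x₂ sin x₁, cos x₁ sin x₂)`. -/
def cellV (A : ℝ) (x : En 2) : En 2 :=
  vec2 (-(A * Real.cos (x 1) * Real.sin (x 0))) (A * Real.cos (x 0) * Real.sin (x 1))

/-- `(a,c)^⊥ = (−c,a)`. -/
def perp2 (v : En 2) : En 2 := vec2 (-(v 1)) (v 0)

/-- One step of the Kohn–Serfaty game:
`x ↦ x + τ√(2d) b η + τ²|η| η^⊥ − τ² V(x)`. -/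
def gameStep (V : En 2 → En 2) (d τ : ℝ) (x η : En 2) (b : ℝ) : En 2 :=
  x + (τ * Real.sqrt (2 * d) * b) • η + (τ ^ 2 * ‖η‖) • perp2 η - τ ^ 2 • V x

/-- A game history: the list of pairs `(ηᵢ, bᵢ)` played so far. -/
abbrev GameHist := List (En 2 × ℝ)

/-- A strategy for player I: the next direction `η` as a function of the history. -/
abbrev StrategyI := GameHist → En 2

/-- A strategy for player II: the next sign `b` as a function of the history
and of player I's current choice `η`. -/
abbrev StrategyII := GameHist → En 2 → ℝ

/-- The history and position of the game after `n` steps. -/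
def gameState (V : En 2 → En 2) (d τ : ℝ) (x₀ : En 2)
    (σI : StrategyI) (σII : StrategyII) : ℕ → GameHist × En 2
  | 0 => ([], x₀)
  | n + 1 =>
      let s := gameState V d τ x₀ σI σII n
      let η := σI s.1
      let b := σII s.1 η
      (s.1 ++ [(η, b)], gameStep V d τ s.2 η b)

/-- The game trajectory: position after `k` steps. -/
def gameTraj (V : En 2 → En 2) (d τ : ℝ) (x₀ : En 2)
    (σI : StrategyI) (σII : StrategyII) (k : ℕ) : En 2 :=
  (gameState V d τ x₀ σI σII k).2

/-- Player I must choose directions in the closed unit ball. -/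
def ValidI (σI : StrategyI) : Prop := ∀ h, ‖σI h‖ ≤ 1

/-- Player II must choose signs in `{−1, 1}`. -/
def ValidII (σII : StrategyII) : Prop := ∀ h η, σII h η = 1 ∨ σII h η = -1

/-- `S` is reachable from `x` within time `T`: for every open `U ⊇ S` there are
step sizes `τ_m` and numbers of steps `N_m → ∞` with `N_m τ_m² ≤ T` such that,
for each `m`, player I has a strategy forcing the game trajectory starting at
`x` to satisfy `x_{N_m} ∈ U` regardless of player II's choices. -/
def ReachableWithin (V : En 2 → En 2) (d : ℝ) (x : En 2) (S : Set (En 2)) (T : ℝ) : Prop :=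
  ∀ U : Set (En 2), IsOpen U → S ⊆ U →
    ∃ (τm : ℕ → ℝ) (Nm : ℕ → ℕ),
      (∀ m, 0 < τm m) ∧
      Filter.Tendsto Nm Filter.atTop Filter.atTop ∧
      (∀ m, (Nm m : ℝ) * τm m ^ 2 ≤ T) ∧
      (∀ m, ∃ σI : StrategyI, ValidI σI ∧
        ∀ σII : StrategyII, ValidII σII → gameTraj V d (τm m) x σI σII (Nm m) ∈ U)

/-- The value `u_τ(x, kτ²)` of the Kohn–Serfaty game with terminal cost `g`. -/
def gameValue (V : En 2 → En 2) (d τ : ℝ) (g : En 2 → ℝ) : ℕ → En 2 → ℝ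
  | 0, x => g x
  | k + 1, x => ⨅ η : Metric.closedBall (0 : En 2) 1,
      max (gameValue V d τ g k (gameStep V d τ x (η : En 2) 1))
          (gameValue V d τ g k (gameStep V d τ x (η : En 2) (-1)))

/-- The cell `Q = [0,π]²`. -/
def Qcell : Set (En 2) := {x | x 0 ∈ Set.Icc 0 Real.pi ∧ x 1 ∈ Set.Icc 0 Real.pi}

/-- `Q_μ = {x ∈ Q : H(x) > μ}`. -/
def Qmu (μ : ℝ) : Set (En 2) := {x ∈ Qcell | μ < cellH x}

/-- `Γ_μ = {x : min(|x₁|, |x₂|, |x₁−π|, |x₂−π|) < μ}`. -/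
def Gammamu (μ : ℝ) : Set (En 2) :=
  {x | min (min |x 0| |x 1|) (min |x 0 - Real.pi| |x 1 - Real.pi|) < μ}


section Aux

lemma norm_perp2 (v : En 2) : ‖perp2 v‖ = ‖v‖ := by
  simp only [EuclideanSpace.norm_eq, Fin.sum_univ_two]
  have h0 : perp2 v 0 = -(v 1) := rfl
  have h1 : perp2 v 1 = v 0 := rfl
  rw [h0, h1]
  congr 1
  simp [sq_abs]
  ring

lemma sqrt_shift (r s c : ℝ) (hr : 0 ≤ r) (hs : 0 ≤ s) (hc : 0 ≤ c) :
    Real.sqrt ((r + c) ^ 2 + s) ≤ Real.sqrt (r ^ 2 + s) + c := by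
  have h1 : r ≤ Real.sqrt (r ^ 2 + s) := by
    calc r = Real.sqrt (r ^ 2) := (Real.sqrt_sq hr).symm
    _ ≤ _ := Real.sqrt_le_sqrt (by linarith)
  have h2 : (0:ℝ) ≤ Real.sqrt (r ^ 2 + s) := Real.sqrt_nonneg _
  have hsq : Real.sqrt (r ^ 2 + s) ^ 2 = r ^ 2 + s := Real.sq_sqrt (by positivity)
  have hkey : (r + c) ^ 2 + s ≤ (Real.sqrt (r ^ 2 + s) + c) ^ 2 := by nlinarith
  calc Real.sqrt ((r + c) ^ 2 + s) ≤ Real.sqrt ((Real.sqrt (r ^ 2 + s) + c) ^ 2) :=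
        Real.sqrt_le_sqrt hkey
  _ = _ := Real.sqrt_sq (by linarith)

lemma V_bound (V : En 2 → En 2) (hVc : Continuous V) (hVper : ZPeriodic V) :
    ∃ M : ℝ, 0 ≤ M ∧ ∀ x, ‖V x‖ ≤ M := by
  obtain ⟨M0, hM0⟩ := (isCompact_closedBall (0 : En 2) 2).exists_bound_of_continuousOn
    hVc.continuousOn
  refine ⟨max M0 0, le_max_right _ _, fun x => ?_⟩
  set y : En 2 := x + (WithLp.equiv 2 (Fin 2 → ℝ)).symm (fun i => ((-⌊x i⌋ : ℤ) : ℝ)) with hy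
  have hVxy : V y = V x := hVper (fun i => -⌊x i⌋) x
  have hyi : ∀ i, y i = Int.fract (x i) := by
    intro i
    simp only [hy, PiLp.add_apply, WithLp.equiv_symm_apply, PiLp.toLp_apply, Int.cast_neg, Int.fract]
    ring
  have hy2 : y ∈ Metric.closedBall (0 : En 2) 2 := by
    rw [Metric.mem_closedBall, dist_zero_right, EuclideanSpace.norm_eq, Fin.sum_univ_two,
      hyi 0, hyi 1]
    have h00 := Int.fract_nonneg (x 0)
    have h01 := Int.fract_lt_one (x 0)
    have h10 := Int.fract_nonneg (x 1)
    have h11 := Int.fract_lt_one (x 1)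
    calc Real.sqrt (‖Int.fract (x 0)‖ ^ 2 + ‖Int.fract (x 1)‖ ^ 2)
        ≤ Real.sqrt (2 ^ 2) := by
          apply Real.sqrt_le_sqrt
          rw [Real.norm_eq_abs, Real.norm_eq_abs, abs_of_nonneg h00, abs_of_nonneg h10]
          nlinarith
    _ = 2 := Real.sqrt_sq (by norm_num)
  calc ‖V x‖ = ‖V y‖ := by rw [hVxy]
  _ ≤ M0 := hM0 y hy2
  _ ≤ _ := le_max_left _ _

end Aux


section GameLemmas

lemma sqrt_sq_add (a s : ℝ) (ha : 0 ≤ a) (hs : 0 ≤ s) :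
    Real.sqrt (a ^ 2 + s) ≤ a + Real.sqrt s := by
  have h1 : a ^ 2 + s ≤ (a + Real.sqrt s) ^ 2 := by
    nlinarith [Real.sq_sqrt hs, Real.sqrt_nonneg s]
  calc Real.sqrt (a ^ 2 + s) ≤ Real.sqrt ((a + Real.sqrt s) ^ 2) := Real.sqrt_le_sqrt h1
  _ = _ := Real.sqrt_sq (by positivity)

lemma gameValue_succ (V : En 2 → En 2) (d τ : ℝ) (g : En 2 → ℝ) (k : ℕ) (y : En 2) :
    gameValue V d τ g (k + 1) y = ⨅ η : Metric.closedBall (0 : En 2) 1,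
      max (gameValue V d τ g k (gameStep V d τ y (η : En 2) 1))
          (gameValue V d τ g k (gameStep V d τ y (η : En 2) (-1))) := rfl

lemma gv_lower {V : En 2 → En 2} {d τ M : ℝ} {g : En 2 → ℝ}
    (hd : 0 < d) (hτ : 0 < τ) (hM : ∀ z, ‖V z‖ ≤ M) (hM0 : 0 ≤ M)
    (hg : Continuous g) (x : En 2) :
    ∀ (k : ℕ) (y : En 2) (ρ : ℝ),
      Real.sqrt (‖y - x‖ ^ 2 + 2 * d * (k : ℝ) * τ ^ 2) + (k : ℝ) * (M + 1) * τ ^ 2 ≤ ρ →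
      sInf (g '' Metric.closedBall x ρ) ≤ gameValue V d τ g k y := by
  intro k
  induction k with
  | zero =>
    intro y ρ hρ
    have h : ‖y - x‖ ≤ ρ := by
      have h2 : Real.sqrt (‖y - x‖ ^ 2 + 2 * d * ((0:ℕ) : ℝ) * τ ^ 2) = ‖y - x‖ := by
        push_cast
        rw [show ‖y - x‖ ^ 2 + 2 * d * 0 * τ ^ 2 = ‖y - x‖ ^ 2 by ring]
        exact Real.sqrt_sq (norm_nonneg _)
      rw [h2] at hρ
      push_cast at hρ
      linarith
    exact csInf_le ((isCompact_closedBall x ρ).image hg).bddBelow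
      (Set.mem_image_of_mem g (mem_closedBall_iff_norm.mpr h))
  | succ k ih =>
    intro y ρ hρ
    push_cast at hρ
    rw [gameValue_succ]
    haveI : Nonempty (Metric.closedBall (0 : En 2) 1) :=
      ⟨⟨0, Metric.mem_closedBall_self zero_le_one⟩⟩
    apply le_ciInf
    rintro ⟨η, hη⟩
    have hη1 : ‖η‖ ≤ 1 := by simpa [mem_closedBall_iff_norm] using hη
    set D : En 2 := (τ ^ 2 * ‖η‖) • perp2 η - τ ^ 2 • V y with hD
    set w : En 2 := y - x + D with hw
    set b : ℝ := if 0 ≤ (inner ℝ w η : ℝ) then -1 else 1 with hb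
    have hb1 : b = 1 ∨ b = -1 := by rw [hb]; split <;> simp
    have hbmul : b * (inner ℝ w η : ℝ) ≤ 0 := by
      rw [hb]; split
      · next h => nlinarith
      · next h => nlinarith [not_le.mp h]
    set s : ℝ := τ * Real.sqrt (2 * d) * b with hs
    have hstep : gameStep V d τ y η b - x = w + s • η := by
      simp only [gameStep, hw, hD, hs]
      abel
    have hDle : ‖D‖ ≤ (M + 1) * τ ^ 2 := by
      calc ‖D‖ ≤ ‖(τ ^ 2 * ‖η‖) • perp2 η‖ + ‖τ ^ 2 • V y‖ := norm_sub_le _ _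
      _ = (τ ^ 2 * ‖η‖) * ‖η‖ + τ ^ 2 * ‖V y‖ := by
          rw [norm_smul, norm_smul, norm_perp2, Real.norm_eq_abs, Real.norm_eq_abs,
            abs_of_nonneg (by positivity : (0:ℝ) ≤ τ ^ 2 * ‖η‖),
            abs_of_nonneg (sq_nonneg τ)]
      _ ≤ (M + 1) * τ ^ 2 := by
          linarith [mul_nonneg (mul_nonneg (sq_nonneg τ) (norm_nonneg η)) (sub_nonneg.mpr hη1),
            mul_nonneg (sq_nonneg τ) (sub_nonneg.mpr hη1),
            mul_nonneg (sq_nonneg τ) (sub_nonneg.mpr (hM y))]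
    have hwle : ‖w‖ ≤ ‖y - x‖ + (M + 1) * τ ^ 2 := by
      calc ‖w‖ ≤ ‖y - x‖ + ‖D‖ := norm_add_le _ _
      _ ≤ _ := by linarith
    have hs2 : ‖s • η‖ ^ 2 ≤ 2 * d * τ ^ 2 := by
      rw [norm_smul, Real.norm_eq_abs]
      have habs : |s| = τ * Real.sqrt (2 * d) := by
        rw [hs, abs_mul, abs_mul, abs_of_nonneg hτ.le,
          abs_of_nonneg (Real.sqrt_nonneg _)]
        rcases hb1 with h | h <;> simp [h]
      rw [habs, mul_pow, mul_pow, Real.sq_sqrt (by linarith : (0:ℝ) ≤ 2 * d)]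
      have h2 : ‖η‖ ^ 2 ≤ 1 := by nlinarith [norm_nonneg η]
      linarith [mul_nonneg (mul_nonneg hd.le (sq_nonneg τ)) (sub_nonneg.mpr h2)]
    have hnorm2 : ‖gameStep V d τ y η b - x‖ ^ 2
        ≤ (‖y - x‖ + (M + 1) * τ ^ 2) ^ 2 + 2 * d * τ ^ 2 := by
      rw [hstep, norm_add_sq_real, real_inner_smul_right]
      have hsin : s * (inner ℝ w η : ℝ) ≤ 0 := by
        rw [hs, mul_assoc]
        have h0 : (0:ℝ) ≤ τ * Real.sqrt (2 * d) := by positivity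
        nlinarith [hbmul]
      nlinarith [hwle, hsin, hs2, norm_nonneg w]
    have hknn : (0:ℝ) ≤ 2 * d * ((k : ℝ) + 1) * τ ^ 2 :=
      mul_nonneg (mul_nonneg (by linarith) (by positivity)) (sq_nonneg τ)
    have happ : Real.sqrt (‖gameStep V d τ y η b - x‖ ^ 2 + 2 * d * (k : ℝ) * τ ^ 2)
        + (k : ℝ) * (M + 1) * τ ^ 2 ≤ ρ := by
      have h1 : ‖gameStep V d τ y η b - x‖ ^ 2 + 2 * d * (k : ℝ) * τ ^ 2
          ≤ (‖y - x‖ + (M + 1) * τ ^ 2) ^ 2 + 2 * d * ((k : ℝ) + 1) * τ ^ 2 := by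
        nlinarith [hnorm2]
      have h2 : Real.sqrt (‖gameStep V d τ y η b - x‖ ^ 2 + 2 * d * (k : ℝ) * τ ^ 2)
          ≤ Real.sqrt (‖y - x‖ ^ 2 + 2 * d * ((k : ℝ) + 1) * τ ^ 2) + (M + 1) * τ ^ 2 := by
        calc Real.sqrt (‖gameStep V d τ y η b - x‖ ^ 2 + 2 * d * (k : ℝ) * τ ^ 2)
            ≤ Real.sqrt ((‖y - x‖ + (M + 1) * τ ^ 2) ^ 2 + 2 * d * ((k : ℝ) + 1) * τ ^ 2) :=
              Real.sqrt_le_sqrt h1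
        _ ≤ _ := sqrt_shift _ _ _ (norm_nonneg _) hknn (by positivity)
      linarith
    have hIH := ih (gameStep V d τ y η b) ρ happ
    rcases hb1 with h | h
    · rw [h] at hIH; exact hIH.trans (le_max_left _ _)
    · rw [h] at hIH; exact hIH.trans (le_max_right _ _)

lemma gv_upper {V : En 2 → En 2} {d τ M : ℝ} {g : En 2 → ℝ}
    (hd : 0 < d) (hτ : 0 < τ) (hM : ∀ z, ‖V z‖ ≤ M) (hM0 : 0 ≤ M)
    (hg : Continuous g) (x : En 2) :
    ∀ (k : ℕ) (y : En 2) (ρ : ℝ),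
      ‖y - x‖ + (k : ℝ) * (M + 1) * τ ^ 2 ≤ ρ →
      gameValue V d τ g k y ≤ sSup (g '' Metric.closedBall x ρ) := by
  intro k
  induction k with
  | zero =>
    intro y ρ hρ
    push_cast at hρ
    have h : ‖y - x‖ ≤ ρ := by linarith
    exact le_csSup ((isCompact_closedBall x ρ).image hg).bddAbove
      (Set.mem_image_of_mem g (mem_closedBall_iff_norm.mpr h))
  | succ k ih =>
    intro y ρ hρ
    push_cast at hρ
    rw [gameValue_succ]
    have hbdd : BddBelow (Set.range fun η : Metric.closedBall (0 : En 2) 1 =>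
        max (gameValue V d τ g k (gameStep V d τ y (η : En 2) 1))
            (gameValue V d τ g k (gameStep V d τ y (η : En 2) (-1)))) := by
      set r₀ : ℝ := ‖y - x‖ + τ * Real.sqrt (2 * d) + (M + 1) * τ ^ 2 with hr₀
      have hr₀nn : 0 ≤ r₀ := by
        have : (0:ℝ) ≤ τ * Real.sqrt (2 * d) := by positivity
        have : (0:ℝ) ≤ (M + 1) * τ ^ 2 := by positivity
        simp only [hr₀]
        positivity
      set ρ₀ : ℝ := r₀ + Real.sqrt (2 * d * (k : ℝ) * τ ^ 2) + (k : ℝ) * (M + 1) * τ ^ 2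
      refine ⟨sInf (g '' Metric.closedBall x ρ₀), ?_⟩
      rintro v ⟨⟨η, hη⟩, rfl⟩
      have hη1 : ‖η‖ ≤ 1 := by simpa [mem_closedBall_iff_norm] using hη
      refine le_trans ?_ (le_max_left _ _)
      apply gv_lower hd hτ hM hM0 hg x k
      have hdec : gameStep V d τ y η 1 - x
          = (y - x) + ((τ * Real.sqrt (2 * d) * 1) • η
            + ((τ ^ 2 * ‖η‖) • perp2 η - τ ^ 2 • V y)) := by
        simp only [gameStep]; abel
      have hst : ‖gameStep V d τ y η 1 - x‖ ≤ r₀ := by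
        rw [hdec]
        calc ‖(y - x) + ((τ * Real.sqrt (2 * d) * 1) • η
              + ((τ ^ 2 * ‖η‖) • perp2 η - τ ^ 2 • V y))‖
            ≤ ‖y - x‖ + (‖(τ * Real.sqrt (2 * d) * 1) • η‖
              + (‖(τ ^ 2 * ‖η‖) • perp2 η‖ + ‖τ ^ 2 • V y‖)) := by
              refine (norm_add_le _ _).trans ?_
              gcongr
              refine (norm_add_le _ _).trans ?_
              gcongr
              exact norm_sub_le _ _
        _ ≤ r₀ := by
              rw [norm_smul, norm_smul, norm_smul, norm_perp2, Real.norm_eq_abs,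
                Real.norm_eq_abs, Real.norm_eq_abs, mul_one,
                abs_of_nonneg (by positivity : (0:ℝ) ≤ τ * Real.sqrt (2 * d)),
                abs_of_nonneg (by positivity : (0:ℝ) ≤ τ ^ 2 * ‖η‖),
                abs_of_nonneg (sq_nonneg τ), hr₀]
              linarith [mul_nonneg (by positivity : (0:ℝ) ≤ τ * Real.sqrt (2 * d))
                  (sub_nonneg.mpr hη1),
                mul_nonneg (mul_nonneg (sq_nonneg τ) (norm_nonneg η)) (sub_nonneg.mpr hη1),
                mul_nonneg (sq_nonneg τ) (sub_nonneg.mpr hη1),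
                mul_nonneg (sq_nonneg τ) (sub_nonneg.mpr (hM y))]
      have hsnn : (0:ℝ) ≤ 2 * d * (k : ℝ) * τ ^ 2 :=
        mul_nonneg (mul_nonneg (by linarith) (Nat.cast_nonneg k)) (sq_nonneg τ)
      have h1 : ‖gameStep V d τ y η 1 - x‖ ^ 2 + 2 * d * (k : ℝ) * τ ^ 2
          ≤ r₀ ^ 2 + 2 * d * (k : ℝ) * τ ^ 2 := by
        nlinarith [norm_nonneg (gameStep V d τ y η 1 - x)]
      calc Real.sqrt (‖gameStep V d τ y η 1 - x‖ ^ 2 + 2 * d * (k : ℝ) * τ ^ 2)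
            + (k : ℝ) * (M + 1) * τ ^ 2
          ≤ Real.sqrt (r₀ ^ 2 + 2 * d * (k : ℝ) * τ ^ 2) + (k : ℝ) * (M + 1) * τ ^ 2 :=
            add_le_add_left (Real.sqrt_le_sqrt h1) _
      _ ≤ (r₀ + Real.sqrt (2 * d * (k : ℝ) * τ ^ 2)) + (k : ℝ) * (M + 1) * τ ^ 2 :=
            add_le_add_left (sqrt_sq_add _ _ hr₀nn hsnn) _
      _ ≤ ρ₀ := le_of_eq rfl
    refine le_trans (ciInf_le hbdd ⟨0, Metric.mem_closedBall_self zero_le_one⟩) ?_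
    have hstep0 : ∀ b : ℝ, gameStep V d τ y (0 : En 2) b = y - τ ^ 2 • V y := by
      intro b
      simp [gameStep]
    rw [hstep0 1, hstep0 (-1), max_self]
    apply ih
    have hle : ‖y - τ ^ 2 • V y - x‖ ≤ ‖y - x‖ + (M + 1) * τ ^ 2 := by
      have hdec : y - τ ^ 2 • V y - x = (y - x) + (-(τ ^ 2 • V y)) := by abel
      rw [hdec]
      refine (norm_add_le _ _).trans ?_
      rw [norm_neg, norm_smul, Real.norm_eq_abs, abs_of_nonneg (sq_nonneg τ)]
      nlinarith [norm_nonneg (V y), sq_nonneg τ, hM y]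
    linarith

end GameLemmas


/-- Control of the game value near the initial time:
`min_{|y−x| ≤ C√t} g(y) ≤ u_τ(x, Nτ²) ≤ max_{|y−x| ≤ C√t} g(y)`. -/
theorem game_value_initial_control
    (d : ℝ) (hd : 0 < d) (V : En 2 → En 2) (hVc : Continuous V) (hVper : ZPeriodic V)
    (g : En 2 → ℝ) (hg : UniformContinuous g) :
    ∃ C > 0, ∀ τ ∈ Set.Ioc (0 : ℝ) 1, ∀ N : ℕ,
      (N : ℝ) * τ ^ 2 ∈ Set.Ioc (0 : ℝ) 1 → ∀ x : En 2,
        sInf (g '' Metric.closedBall x (C * Real.sqrt ((N : ℝ) * τ ^ 2)))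
            ≤ gameValue V d τ g N x ∧
        gameValue V d τ g N x
            ≤ sSup (g '' Metric.closedBall x (C * Real.sqrt ((N : ℝ) * τ ^ 2))) := by
  obtain ⟨M, hM0, hM⟩ := V_bound V hVc hVper
  refine ⟨Real.sqrt (2 * d) + (M + 1), by nlinarith [Real.sqrt_nonneg (2 * d)], ?_⟩
  rintro τ ⟨hτ0, hτ1⟩ N ⟨ht0, ht1⟩ x
  set t : ℝ := (N : ℝ) * τ ^ 2 with htdef
  have hstnn : (0:ℝ) ≤ Real.sqrt t := Real.sqrt_nonneg _
  have hs1 : Real.sqrt t ≤ 1 := Real.sqrt_le_one.mpr ht1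
  have htt : t ≤ Real.sqrt t := by
    nlinarith [Real.sq_sqrt ht0.le]
  have hsq : Real.sqrt (2 * d * (N : ℝ) * τ ^ 2) = Real.sqrt (2 * d) * Real.sqrt t := by
    rw [show 2 * d * (N : ℝ) * τ ^ 2 = (2 * d) * ((N : ℝ) * τ ^ 2) by ring,
      Real.sqrt_mul (by linarith)]
  have hMt : (N : ℝ) * (M + 1) * τ ^ 2 = (M + 1) * t := by rw [htdef]; ring
  have hMts : (M + 1) * t ≤ (M + 1) * Real.sqrt t := by nlinarith
  constructor
  · apply gv_lower hd hτ0 hM hM0 hg.continuous x N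
    rw [sub_self, norm_zero,
      show (0:ℝ) ^ 2 + 2 * d * (N : ℝ) * τ ^ 2 = 2 * d * (N : ℝ) * τ ^ 2 by ring,
      hsq, hMt]
    have : (Real.sqrt (2 * d) + (M + 1)) * Real.sqrt t
        = Real.sqrt (2 * d) * Real.sqrt t + (M + 1) * Real.sqrt t := by ring
    rw [this]
    linarith
  · apply gv_upper hd hτ0 hM hM0 hg.continuous x N
    rw [sub_self, norm_zero, hMt]
    have : (Real.sqrt (2 * d) + (M + 1)) * Real.sqrt t
        = Real.sqrt (2 * d) * Real.sqrt t + (M + 1) * Real.sqrt t := by ring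
    rw [this]
    nlinarith [Real.sqrt_nonneg (2 * d)]
end
end

section
/- Let α > 0, let Ω ⊂ ℝⁿ be a bounded open set, and let V:ℝⁿ→ℝⁿ be continuous. If u ∈ C(Ω̄) is a viscosity supersolution of the stationary equation (1 − d div(Du/|Du|))₊|Du| + V(x)·Du = α on Ω, then min_{x ∈ Ω̄} u(x) = min_{x ∈ ∂Ω} u(x). -/
noncomputable section

/-- Minimum value principle: a continuous supersolution of the
stationary equation with `α > 0` attains its minimum over `Ω̄` on `∂Ω`. -/
theorem minimum_value_principle {n : ℕ}
    (d α : ℝ) (hd : 0 < d) (hα : 0 < α)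
    (Ω : Set (En n)) (hΩo : IsOpen Ω) (hΩb : Bornology.IsBounded Ω) (hΩne : Ω.Nonempty)
    (V : En n → En n) (hVc : Continuous V)
    (u : En n → ℝ) (hu : ContinuousOn u (closure Ω))
    (hsup : IsStatSupersolutionOn d V α Ω u) :
    sInf (u '' closure Ω) = sInf (u '' frontier Ω) := by
  have hK : IsCompact (closure Ω) := hΩb.isCompact_closure
  have hne : (closure Ω).Nonempty := hΩne.closure
  obtain ⟨x₀, hx₀, hmin⟩ := hK.exists_isMinOn hne hu
  -- x₀ cannot be an interior point
  have hx₀f : x₀ ∈ frontier Ω := by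
    by_contra hxf
    have hxΩ : x₀ ∈ Ω := by
      rcases (em (x₀ ∈ Ω)) with h | h
      · exact h
      · exact absurd ⟨hx₀, by rwa [hΩo.interior_eq]⟩ hxf
    have h0 := hsup (fun _ => 0) contDiff_const x₀ hxΩ
      (fun x hx => by simpa using hmin (subset_closure hx))
    have hg : gradient (fun _ : En n => (0 : ℝ)) x₀ = 0 := by
      simp [gradient]
    have hh : hess (fun _ : En n => (0 : ℝ)) x₀ = 0 := by
      have : (fderiv ℝ fun _ : En n => (0:ℝ)) = fun _ => 0 :=
        funext fun y => fderiv_const_apply 0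
      simp only [hess, this]
      exact fderiv_const_apply 0
    rw [hg, hh] at h0
    have : Fover d (0 : En n →L[ℝ] En n →L[ℝ] ℝ) (0 : En n) = 0 := by
      simp [Fover]
      exact Or.inr (norm_zero (E := En n →L[ℝ] En n →L[ℝ] ℝ))
    rw [this] at h0
    simp at h0
    linarith
  -- both infima equal u x₀
  have h1 : IsLeast (u '' closure Ω) (u x₀) :=
    ⟨⟨x₀, hx₀, rfl⟩, by rintro y ⟨z, hz, rfl⟩; exact hmin hz⟩
  have h2 : IsLeast (u '' frontier Ω) (u x₀) :=
    ⟨⟨x₀, hx₀f, rfl⟩, by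
      rintro y ⟨z, hz, rfl⟩
      exact hmin (frontier_subset_closure hz)⟩
  rw [h1.csInf_eq, h2.csInf_eq]
end
end

section
/- Let H(x₁,x₂) = sin x₁ sin x₂. For every x = (x₁,x₂) ∈ [0,π]×[0,π], |DH(x)| ≥ √(2(H(x) − H(x)²)). -/
noncomputable section

/-- Gradient lower bound for the stream function:
`|DH(x)| ≥ √(2(H(x) − H(x)²))` on `[0,π]²`, where
`DH = (cos x₁ sin x₂, sin x₁ cos x₂)`. -/
theorem stream_gradient_lower_bound :
    ∀ x₁ ∈ Set.Icc (0 : ℝ) Real.pi, ∀ x₂ ∈ Set.Icc (0 : ℝ) Real.pi,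
      Real.sqrt (2 * (Real.sin x₁ * Real.sin x₂ - (Real.sin x₁ * Real.sin x₂) ^ 2))
        ≤ ‖vec2 (Real.cos x₁ * Real.sin x₂) (Real.sin x₁ * Real.cos x₂)‖ := by
  intro x₁ _ x₂ _
  have hn : ‖vec2 (Real.cos x₁ * Real.sin x₂) (Real.sin x₁ * Real.cos x₂)‖ =
      Real.sqrt ((Real.cos x₁ * Real.sin x₂) ^ 2 + (Real.sin x₁ * Real.cos x₂) ^ 2) := by
    rw [EuclideanSpace.norm_eq]
    simp [vec2, Fin.sum_univ_two, sq_abs]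
  rw [hn]
  apply Real.sqrt_le_sqrt
  nlinarith [Real.sin_sq_add_cos_sq x₁, Real.sin_sq_add_cos_sq x₂,
    sq_nonneg (Real.sin x₁ - Real.sin x₂)]
end
end
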